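/- Let α > 4. There exists a constant C > 0, depending only on α, such that for all positive integers N₁, N₂, N₃: ∑_{i_l=1}^{N₁} ∑_{i_r=1}^{N₁} ∑_{j_l=1}^{N₂} ∑_{j_r=1}^{N₂} ∑_{k_l=1}^{N₃} ∑_{k_r=1}^{N₃} ((i_l+i_r-1)² + (j_l-j_r)² + (k_l-k_r)²)^{-α/2} ≤ C N₂ N₃. -/

import Mathlib

open Finset

private lemma tele (a : ℝ) (ha : 0 < a) (M : ℕ) :
    ∑ t ∈ range M, ((a + 1 + (t : ℝ)) ^ 2)⁻¹ ≤ 1 / a - 1 / (a + M) := by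
  induction M with
  | zero => simp
  | succ M ih =>
    rw [Finset.sum_range_succ]
    have h1 : (0:ℝ) < a + M := by positivity
    have key : ((a + 1 + (M:ℝ)) ^ 2)⁻¹ ≤ ((a + M) * (a + M + 1))⁻¹ := by
      apply inv_anti₀ (by positivity)
      nlinarith
    have heq : ((a + M) * (a + M + 1))⁻¹ = 1 / (a + M) - 1 / (a + M + 1) := by
      field_simp
      ring
    push_cast
    rw [show a + ((M:ℝ) + 1) = a + (M:ℝ) + 1 by ring]
    rw [heq] at key
    linarith

private lemma sumsq (a : ℝ) (ha : 1 ≤ a) (M : ℕ) :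
    ∑ t ∈ range M, ((a + (t : ℝ)) ^ 2)⁻¹ ≤ 2 / a := by
  have ha0 : (0:ℝ) < a := by linarith
  cases M with
  | zero => simp; positivity
  | succ M =>
    rw [Finset.sum_range_succ']
    have h1 : ∑ i ∈ range M, ((a + ((i + 1 : ℕ) : ℝ)) ^ 2)⁻¹ ≤ 1 / a := by
      have ht := tele a ha0 M
      have heq : ∑ i ∈ range M, ((a + ((i + 1 : ℕ) : ℝ)) ^ 2)⁻¹
          = ∑ i ∈ range M, ((a + 1 + (i : ℝ)) ^ 2)⁻¹ := by
        apply Finset.sum_congr rfl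
        intro i _
        push_cast
        ring_nf
      rw [heq]
      have hM : (0:ℝ) ≤ 1 / (a + M) := by positivity
      linarith
    have h0 : ((a + ((0:ℕ):ℝ)) ^ 2)⁻¹ ≤ 1 / a := by
      push_cast
      rw [add_zero, one_div]
      apply inv_anti₀ ha0
      nlinarith
    have h2 : 1/a + 1/a = 2/a := by ring
    linarith

private lemma sumG (a : ℝ) (ha : 1 ≤ a) (M : ℕ) :
    ∑ t ∈ range M, (a ^ 2 + (t : ℝ) ^ 2)⁻¹ ≤ 4 / a := by
  have ha0 : (0:ℝ) < a := by linarith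
  calc ∑ t ∈ range M, (a ^ 2 + (t : ℝ) ^ 2)⁻¹
      ≤ ∑ t ∈ range M, 2 * ((a + (t : ℝ)) ^ 2)⁻¹ := by
        apply Finset.sum_le_sum
        intro t _
        have ht : (0:ℝ) ≤ t := Nat.cast_nonneg t
        have h3 : (a + (t:ℝ)) ^ 2 ≤ 2 * (a ^ 2 + (t:ℝ) ^ 2) := by nlinarith [sq_nonneg (a - (t:ℝ))]
        calc (a ^ 2 + (t:ℝ) ^ 2)⁻¹ = 2 * (2 * (a ^ 2 + (t:ℝ) ^ 2))⁻¹ := by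
              rw [mul_inv]
              ring
          _ ≤ 2 * ((a + (t : ℝ)) ^ 2)⁻¹ := by
              gcongr
    _ = 2 * ∑ t ∈ range M, ((a + (t : ℝ)) ^ 2)⁻¹ := by rw [Finset.mul_sum]
    _ ≤ 2 * (2 / a) := by
        have := sumsq a ha M
        linarith
    _ = 4 / a := by ring

private lemma sumG' (a : ℝ) (ha : 1 ≤ a) (M : ℕ) :
    ∑ t ∈ range M, (a ^ 2 + ((t : ℝ) + 1) ^ 2)⁻¹ ≤ 4 / a := by
  have h := sumG a ha (M + 1)
  rw [Finset.sum_range_succ'] at h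
  have h0 : (0:ℝ) ≤ (a ^ 2 + ((0:ℕ) : ℝ) ^ 2)⁻¹ := by positivity
  have heq : ∑ i ∈ range M, (a ^ 2 + ((i + 1 : ℕ) : ℝ) ^ 2)⁻¹
      = ∑ t ∈ range M, (a ^ 2 + ((t : ℝ) + 1) ^ 2)⁻¹ := by
    apply Finset.sum_congr rfl
    intro i _
    push_cast
    ring_nf
  rw [heq] at h
  linarith

private lemma row (a : ℝ) (ha : 1 ≤ a) (x N : ℕ) :
    ∑ y ∈ Icc 1 N, (a ^ 2 + ((x : ℝ) - (y : ℝ)) ^ 2)⁻¹ ≤ 8 / a := by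
  have ha0 : (0:ℝ) < a := by linarith
  have hsub : Icc 1 N ⊆ Icc 1 x ∪ Ioc x N := by
    intro y hy
    simp only [mem_Icc, mem_union, mem_Ioc] at *
    omega
  have hdisj : Disjoint (Icc 1 x) (Ioc x N) := by
    rw [Finset.disjoint_left]
    intro y hy hy'
    simp only [mem_Icc, mem_Ioc] at *
    omega
  calc ∑ y ∈ Icc 1 N, (a ^ 2 + ((x : ℝ) - (y : ℝ)) ^ 2)⁻¹
      ≤ ∑ y ∈ Icc 1 x ∪ Ioc x N, (a ^ 2 + ((x : ℝ) - (y : ℝ)) ^ 2)⁻¹ := by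
        apply Finset.sum_le_sum_of_subset_of_nonneg hsub
        intro y _ _; positivity
    _ = (∑ y ∈ Icc 1 x, (a ^ 2 + ((x : ℝ) - (y : ℝ)) ^ 2)⁻¹)
        + ∑ y ∈ Ioc x N, (a ^ 2 + ((x : ℝ) - (y : ℝ)) ^ 2)⁻¹ := Finset.sum_union hdisj
    _ ≤ 4 / a + 4 / a := by
        gcongr
        · -- left part: y from 1 to x
          have h1 : ∑ y ∈ Icc 1 x, (a ^ 2 + ((x : ℝ) - (y : ℝ)) ^ 2)⁻¹
              = ∑ i ∈ range x, (a ^ 2 + ((x : ℝ) - ((1 + i : ℕ) : ℝ)) ^ 2)⁻¹ := by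
            rw [← Finset.Ico_add_one_right_eq_Icc, Finset.sum_Ico_eq_sum_range]
            simp
          have h2 : ∑ i ∈ range x, (a ^ 2 + ((x : ℝ) - ((1 + i : ℕ) : ℝ)) ^ 2)⁻¹
              = ∑ i ∈ range x, (a ^ 2 + (((x - 1 - i : ℕ)) : ℝ) ^ 2)⁻¹ := by
            apply Finset.sum_congr rfl
            intro i hi
            rw [mem_range] at hi
            have hc : ((x - 1 - i : ℕ) : ℝ) = (x : ℝ) - ((1 + i : ℕ) : ℝ) := by
              have h3 : x - 1 - i = x - (1 + i) := by omega
              rw [h3, Nat.cast_sub (by omega)]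
              try push_cast
              try ring
            rw [hc]
          rw [h1, h2, Finset.sum_range_reflect (fun t => (a ^ 2 + ((t:ℕ) : ℝ) ^ 2)⁻¹) x]
          exact sumG a ha x
        · -- right part: y from x+1 to N
          have h1 : ∑ y ∈ Ioc x N, (a ^ 2 + ((x : ℝ) - (y : ℝ)) ^ 2)⁻¹
              = ∑ i ∈ range (N + 1 - (x + 1)), (a ^ 2 + ((i : ℝ) + 1) ^ 2)⁻¹ := by
            rw [← Finset.Icc_add_one_left_eq_Ioc, ← Finset.Ico_add_one_right_eq_Icc, Finset.sum_Ico_eq_sum_range]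
            apply Finset.sum_congr rfl
            intro i _
            have : ((x:ℝ) - ((x + 1 + i : ℕ) : ℝ)) ^ 2 = ((i : ℝ) + 1) ^ 2 := by
              push_cast
              ring
            rw [this]
          rw [h1]
          exact sumG' a ha _
    _ = 8 / a := by ring

private lemma ptbound (α : ℝ) (hα : 4 < α) (a b c : ℝ) (ha : 1 ≤ a) :
    (a ^ 2 + b ^ 2 + c ^ 2) ^ (-(α / 2))
      ≤ a ^ (-(α - 4)) * ((a ^ 2 + b ^ 2)⁻¹ * (a ^ 2 + c ^ 2)⁻¹) := by
  have ha0 : (0:ℝ) < a := by linarith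
  set x := a ^ 2 + b ^ 2 + c ^ 2 with hx
  have hx0 : (0:ℝ) < x := by positivity
  have hxa : a ^ 2 ≤ x := by nlinarith [sq_nonneg b, sq_nonneg c]
  have hsplit : x ^ (-(α / 2)) = x ^ (-((α - 4) / 2)) * x ^ (-2 : ℝ) := by
    rw [← Real.rpow_add hx0]
    ring_nf
  rw [hsplit]
  have h1 : x ^ (-((α - 4) / 2)) ≤ a ^ (-(α - 4)) := by
    have := Real.rpow_le_rpow_of_nonpos (by positivity : (0:ℝ) < a ^ 2) hxa
      (by linarith : -((α - 4) / 2) ≤ 0)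
    calc x ^ (-((α - 4) / 2)) ≤ (a ^ 2) ^ (-((α - 4) / 2)) := this
      _ = a ^ (-(α - 4)) := by
          rw [← Real.rpow_natCast a 2, ← Real.rpow_mul ha0.le]
          congr 1
          ring
  have h2 : x ^ (-2 : ℝ) ≤ (a ^ 2 + b ^ 2)⁻¹ * (a ^ 2 + c ^ 2)⁻¹ := by
    have hxe : x ^ (-2 : ℝ) = (x ^ 2)⁻¹ := by
      rw [show (-2 : ℝ) = -((2:ℕ):ℝ) by norm_num, Real.rpow_neg hx0.le,
        Real.rpow_natCast]
    rw [hxe, ← mul_inv]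
    apply inv_anti₀ (by positivity)
    nlinarith [sq_nonneg b, sq_nonneg c, sq_nonneg (b*c), mul_nonneg (sq_nonneg b) (sq_nonneg c)]
  calc x ^ (-((α - 4) / 2)) * x ^ (-2 : ℝ)
      ≤ a ^ (-(α - 4)) * ((a ^ 2 + b ^ 2)⁻¹ * (a ^ 2 + c ^ 2)⁻¹) := by
        apply mul_le_mul h1 h2 (by positivity) (by positivity)

private lemma double_row (a : ℝ) (ha : 1 ≤ a) (N : ℕ) :
    ∑ xl ∈ Icc 1 N, ∑ xr ∈ Icc 1 N, (a ^ 2 + ((xl : ℝ) - (xr : ℝ)) ^ 2)⁻¹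
      ≤ N * (8 / a) := by
  calc ∑ xl ∈ Icc 1 N, ∑ xr ∈ Icc 1 N, (a ^ 2 + ((xl : ℝ) - (xr : ℝ)) ^ 2)⁻¹
      ≤ ∑ xl ∈ Icc 1 N, (8 / a) := Finset.sum_le_sum fun xl _ => row a ha xl N
    _ = N * (8 / a) := by
        rw [Finset.sum_const, Nat.card_Icc]
        simp

private lemma inner4 (α : ℝ) (hα : 4 < α) (a : ℝ) (ha : 1 ≤ a) (N₂ N₃ : ℕ) :
    ∑ jl ∈ Icc 1 N₂, ∑ jr ∈ Icc 1 N₂, ∑ kl ∈ Icc 1 N₃, ∑ kr ∈ Icc 1 N₃,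
        (a ^ 2 + ((jl : ℝ) - (jr : ℝ)) ^ 2 + ((kl : ℝ) - (kr : ℝ)) ^ 2) ^ (-(α / 2))
      ≤ 64 * N₂ * N₃ * a ^ (-(α - 2)) := by
  have ha0 : (0:ℝ) < a := by linarith
  calc ∑ jl ∈ Icc 1 N₂, ∑ jr ∈ Icc 1 N₂, ∑ kl ∈ Icc 1 N₃, ∑ kr ∈ Icc 1 N₃,
        (a ^ 2 + ((jl : ℝ) - (jr : ℝ)) ^ 2 + ((kl : ℝ) - (kr : ℝ)) ^ 2) ^ (-(α / 2))
      ≤ ∑ jl ∈ Icc 1 N₂, ∑ jr ∈ Icc 1 N₂, ∑ kl ∈ Icc 1 N₃, ∑ kr ∈ Icc 1 N₃,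
          a ^ (-(α - 4)) * ((a ^ 2 + ((jl : ℝ) - (jr : ℝ)) ^ 2)⁻¹ *
            (a ^ 2 + ((kl : ℝ) - (kr : ℝ)) ^ 2)⁻¹) := by
        apply Finset.sum_le_sum; intro jl _
        apply Finset.sum_le_sum; intro jr _
        apply Finset.sum_le_sum; intro kl _
        apply Finset.sum_le_sum; intro kr _
        exact ptbound α hα a _ _ ha
    _ = a ^ (-(α - 4)) *
          ((∑ jl ∈ Icc 1 N₂, ∑ jr ∈ Icc 1 N₂, (a ^ 2 + ((jl : ℝ) - (jr : ℝ)) ^ 2)⁻¹) *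
           (∑ kl ∈ Icc 1 N₃, ∑ kr ∈ Icc 1 N₃, (a ^ 2 + ((kl : ℝ) - (kr : ℝ)) ^ 2)⁻¹)) := by
        simp only [← mul_assoc, ← Finset.mul_sum, ← Finset.sum_mul]
    _ ≤ a ^ (-(α - 4)) * ((N₂ * (8 / a)) * (N₃ * (8 / a))) := by
        have hj := double_row a ha N₂
        have hk := double_row a ha N₃
        have hjn : (0:ℝ) ≤ ∑ jl ∈ Icc 1 N₂, ∑ jr ∈ Icc 1 N₂,
            (a ^ 2 + ((jl : ℝ) - (jr : ℝ)) ^ 2)⁻¹ := by positivity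
        have hkn : (0:ℝ) ≤ ∑ kl ∈ Icc 1 N₃, ∑ kr ∈ Icc 1 N₃,
            (a ^ 2 + ((kl : ℝ) - (kr : ℝ)) ^ 2)⁻¹ := by positivity
        have hap : (0:ℝ) ≤ a ^ (-(α - 4)) := by positivity
        apply mul_le_mul_of_nonneg_left _ hap
        apply mul_le_mul hj hk hkn (by positivity)
    _ = 64 * N₂ * N₃ * (a ^ (-(α - 4)) * (a ^ 2)⁻¹) := by ring
    _ = 64 * N₂ * N₃ * a ^ (-(α - 2)) := by
        congr 1
        rw [show ((a ^ 2)⁻¹ : ℝ) = a ^ (-2 : ℝ) by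
          rw [show (-2 : ℝ) = -((2:ℕ):ℝ) by norm_num, Real.rpow_neg ha0.le,
            Real.rpow_natCast]]
        rw [← Real.rpow_add ha0]
        ring_nf

/-- Cut-set bound for the polynomial decay model: for `α > 4` there is a constant
`C > 0` such that for all positive integers `N₁, N₂, N₃`, the six-fold sum of
`((i_l+i_r-1)² + (j_l-j_r)² + (k_l-k_r)²)^{-α/2}` over all index tuples is at most
`C N₂ N₃`. -/
theorem cutset_sum_polynomial (α : ℝ) (hα : 4 < α) :
    ∃ C > 0, ∀ N₁ N₂ N₃ : ℕ, 0 < N₁ → 0 < N₂ → 0 < N₃ →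
      (∑ il ∈ Finset.Icc 1 N₁, ∑ ir ∈ Finset.Icc 1 N₁,
        ∑ jl ∈ Finset.Icc 1 N₂, ∑ jr ∈ Finset.Icc 1 N₂,
          ∑ kl ∈ Finset.Icc 1 N₃, ∑ kr ∈ Finset.Icc 1 N₃,
            (((il : ℝ) + (ir : ℝ) - 1) ^ 2 + ((jl : ℝ) - (jr : ℝ)) ^ 2 +
              ((kl : ℝ) - (kr : ℝ)) ^ 2) ^ (-(α / 2)))
        ≤ C * (N₂ : ℝ) * (N₃ : ℝ) := by
  set q : ℝ := (α - 2) / 2 with hqdef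
  have hq : 1 < q := by rw [hqdef]; linarith
  have hsum : Summable (fun n : ℕ => ((n : ℝ) ^ q)⁻¹) :=
    Real.summable_nat_rpow_inv.mpr hq
  set K : ℝ := ∑' n : ℕ, ((n : ℝ) ^ q)⁻¹ with hKdef
  have hK1 : 1 ≤ K := by
    have := Summable.le_tsum hsum 1 (fun n _ => by positivity)
    simpa using this
  have hK0 : 0 < K := by linarith
  refine ⟨64 * K ^ 2, by positivity, ?_⟩
  intro N₁ N₂ N₃ hN₁ hN₂ hN₃
  have hfq : ∀ N : ℕ, ∑ n ∈ Finset.Icc 1 N, ((n : ℝ) ^ q)⁻¹ ≤ K :=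
    fun N => Summable.sum_le_tsum (Finset.Icc 1 N) (fun n _ => by positivity) hsum
  have hfqnn : ∀ N : ℕ, (0:ℝ) ≤ ∑ n ∈ Finset.Icc 1 N, ((n : ℝ) ^ q)⁻¹ :=
    fun N => Finset.sum_nonneg fun n _ => by positivity
  calc (∑ il ∈ Finset.Icc 1 N₁, ∑ ir ∈ Finset.Icc 1 N₁,
        ∑ jl ∈ Finset.Icc 1 N₂, ∑ jr ∈ Finset.Icc 1 N₂,
          ∑ kl ∈ Finset.Icc 1 N₃, ∑ kr ∈ Finset.Icc 1 N₃,
            (((il : ℝ) + (ir : ℝ) - 1) ^ 2 + ((jl : ℝ) - (jr : ℝ)) ^ 2 +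
              ((kl : ℝ) - (kr : ℝ)) ^ 2) ^ (-(α / 2)))
      ≤ ∑ il ∈ Finset.Icc 1 N₁, ∑ ir ∈ Finset.Icc 1 N₁,
          (64 * N₂ * N₃ * (((il : ℝ) + (ir : ℝ) - 1) ^ (-(α - 2)))) := by
        apply Finset.sum_le_sum; intro il hil
        apply Finset.sum_le_sum; intro ir hir
        rw [Finset.mem_Icc] at hil hir
        have h1 : (1:ℝ) ≤ (il : ℝ) + (ir : ℝ) - 1 := by
          have : (1:ℝ) ≤ (il : ℝ) := by exact_mod_cast hil.1
          have : (1:ℝ) ≤ (ir : ℝ) := by exact_mod_cast hir.1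
          linarith [show (1:ℝ) ≤ (il:ℝ) from by exact_mod_cast hil.1]
        exact inner4 α hα ((il : ℝ) + (ir : ℝ) - 1) h1 N₂ N₃
    _ ≤ ∑ il ∈ Finset.Icc 1 N₁, ∑ ir ∈ Finset.Icc 1 N₁,
          (64 * N₂ * N₃ * (((il : ℝ) ^ q)⁻¹ * ((ir : ℝ) ^ q)⁻¹)) := by
        apply Finset.sum_le_sum; intro il hil
        apply Finset.sum_le_sum; intro ir hir
        rw [Finset.mem_Icc] at hil hir
        have hil1 : (1:ℝ) ≤ (il : ℝ) := by exact_mod_cast hil.1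
        have hir1 : (1:ℝ) ≤ (ir : ℝ) := by exact_mod_cast hir.1
        have ha1 : (1:ℝ) ≤ (il : ℝ) + (ir : ℝ) - 1 := by linarith
        have ha0 : (0:ℝ) < (il : ℝ) + (ir : ℝ) - 1 := by linarith
        have hkey : ((il : ℝ) + (ir : ℝ) - 1) ^ (-(α - 2))
            ≤ ((il : ℝ) ^ q)⁻¹ * ((ir : ℝ) ^ q)⁻¹ := by
          have hprod : (il : ℝ) * (ir : ℝ) ≤ (((il : ℝ) + (ir : ℝ) - 1)) ^ 2 := by
            nlinarith
          have step1 : ((il : ℝ) + (ir : ℝ) - 1) ^ (-(α - 2))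
              = ((((il : ℝ) + (ir : ℝ) - 1)) ^ 2) ^ (-q) := by
            rw [← Real.rpow_natCast ((il : ℝ) + (ir : ℝ) - 1) 2,
              ← Real.rpow_mul ha0.le]
            congr 1
            rw [hqdef]
            push_cast
            ring
          rw [step1]
          have step2 : ((((il : ℝ) + (ir : ℝ) - 1)) ^ 2) ^ (-q)
              ≤ ((il : ℝ) * (ir : ℝ)) ^ (-q) :=
            Real.rpow_le_rpow_of_nonpos (by positivity) hprod (by linarith)
          have step3 : ((il : ℝ) * (ir : ℝ)) ^ (-q)
              = ((il : ℝ) ^ q)⁻¹ * ((ir : ℝ) ^ q)⁻¹ := by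
            rw [Real.mul_rpow (by positivity) (by positivity),
              Real.rpow_neg (by positivity), Real.rpow_neg (by positivity)]
          rw [← step3]
          exact step2
        have hc : (0:ℝ) ≤ 64 * (N₂:ℝ) * (N₃:ℝ) := by positivity
        exact mul_le_mul_of_nonneg_left hkey hc
    _ = 64 * N₂ * N₃ * ((∑ il ∈ Finset.Icc 1 N₁, ((il : ℝ) ^ q)⁻¹) *
          (∑ ir ∈ Finset.Icc 1 N₁, ((ir : ℝ) ^ q)⁻¹)) := by
        simp only [← mul_assoc, ← Finset.mul_sum, ← Finset.sum_mul]
    _ ≤ 64 * N₂ * N₃ * (K * K) := by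
        have := hfq N₁
        have h2 := hfqnn N₁
        apply mul_le_mul_of_nonneg_left _ (by positivity)
        exact mul_le_mul this this h2 hK0.le
    _ = 64 * K ^ 2 * (N₂ : ℝ) * (N₃ : ℝ) := by ring
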